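/- Let P₁ be a nonzero bounded projection on a Banach space X with complementary projection P₂ = I − P₁ also nonzero, and let C₁ = R(P₁), C₂ = R(P₂). Define the separation index dist(C₁,C₂) = inf{ ‖ξ₁ − ξ₂‖ : ξ₁ ∈ C₁, ‖ξ₁‖ = 1, ξ₂ ∈ C₂ }. Then dist(C₁,C₂) = 1/‖P₁‖. -/
import Mathlib

theorem stmt_11 (X : Type*) [NormedAddCommGroup X] [NormedSpace ℝ X] [CompleteSpace X]
    (P : X →L[ℝ] X) (hP : ∀ x, P (P x) = P x)
    (hP0 : P ≠ 0) (hP1 : ContinuousLinearMap.id ℝ X - P ≠ 0) :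
    sInf {d : ℝ | ∃ ξ₁ ξ₂ : X, ξ₁ ∈ Set.range P ∧ ‖ξ₁‖ = 1 ∧
        ξ₂ ∈ Set.range (ContinuousLinearMap.id ℝ X - P) ∧ d = ‖ξ₁ - ξ₂‖}
      = 1 / ‖P‖ := by
  have hPnorm : (0:ℝ) < ‖P‖ := norm_pos_iff.mpr hP0
  set S := {d : ℝ | ∃ ξ₁ ξ₂ : X, ξ₁ ∈ Set.range P ∧ ‖ξ₁‖ = 1 ∧
        ξ₂ ∈ Set.range (ContinuousLinearMap.id ℝ X - P) ∧ d = ‖ξ₁ - ξ₂‖} with hS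
  have hlb : ∀ d ∈ S, 1 / ‖P‖ ≤ d := by
    rintro d ⟨ξ₁, ξ₂, ⟨a, ha⟩, hn, ⟨b, hb⟩, rfl⟩
    have h1 : P ξ₁ = ξ₁ := by rw [← ha]; exact hP a
    have h2 : P ξ₂ = 0 := by
      rw [← hb]; simp [map_sub, hP b]
    have h3 : P (ξ₁ - ξ₂) = ξ₁ := by simp [map_sub, h1, h2]
    have h4 := P.le_opNorm (ξ₁ - ξ₂)
    rw [h3, hn] at h4
    rw [div_le_iff₀ hPnorm]
    nlinarith
  have hne : S.Nonempty := by
    obtain ⟨a, ha⟩ := DFunLike.ne_iff.mp hP0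
    simp only [ContinuousLinearMap.zero_apply] at ha
    have hna : (0:ℝ) < ‖P a‖ := norm_pos_iff.mpr ha
    refine ⟨‖‖P a‖⁻¹ • P a - 0‖, ‖P a‖⁻¹ • P a, 0, ⟨‖P a‖⁻¹ • a, by simp [map_smul]⟩, ?_, ⟨0, by simp⟩, rfl⟩
    rw [norm_smul]
    simp [abs_of_pos (inv_pos.mpr hna), inv_mul_cancel₀ hna.ne']
  have hbdd : BddBelow S := ⟨1 / ‖P‖, hlb⟩
  refine le_antisymm ?_ (le_csInf hne hlb)
  refine le_of_forall_gt_imp_ge_of_dense fun b hb => ?_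
  have hb0 : (0:ℝ) < b := lt_trans (by positivity) hb
  have hrP : 1 / b < ‖P‖ := by
    rw [div_lt_iff₀ hb0]
    rw [div_lt_iff₀ hPnorm] at hb
    linarith
  obtain ⟨x, hx1, hx2⟩ := P.exists_lt_apply_of_lt_opNorm hrP
  have hbx : (0:ℝ) < ‖P x‖ := lt_trans (by positivity) hx2
  have hPx : P x ≠ 0 := norm_pos_iff.mp hbx
  have hmem : ‖x‖ / ‖P x‖ ∈ S := by
    refine ⟨‖P x‖⁻¹ • P x, ‖P x‖⁻¹ • (P x - x), ⟨‖P x‖⁻¹ • x, by simp [map_smul]⟩, ?_, ?_, ?_⟩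
    · rw [norm_smul]
      simp [abs_of_pos (inv_pos.mpr hbx), inv_mul_cancel₀ hbx.ne']
    · exact ⟨-(‖P x‖⁻¹ • x), by simp [map_smul, smul_sub]; abel⟩
    · rw [← smul_sub]
      have : P x - (P x - x) = x := by abel
      rw [this, norm_smul]
      simp [abs_of_pos (inv_pos.mpr hbx), div_eq_inv_mul]
  calc sInf S ≤ ‖x‖ / ‖P x‖ := csInf_le hbdd hmem
    _ ≤ b := by
      rw [div_le_iff₀ hbx]
      have h := mul_lt_mul_of_pos_left hx2 hb0
      have h1b : b * (1/b) = 1 := by field_simp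
      nlinarith [hx1.le]
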